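/- For every t ≥ 1 and every n satisfying n ≥ 156·t²·log₂(8n), there exists a code C ⊆ {0,1}^n with |C| ≥ 2^{n − ⌈156·t²·log₂(8n)⌉} (i.e., with at most O(t² log n) bits of redundancy) that corrects t composition errors with unique string recovery: for any two distinct strings s, s' ∈ C, no multiset M of compositions can be obtained both from C(s) by at most t composition errors and from C(s') by at most t composition errors. -/

import Mathlib

/-- All nonempty contiguous substrings of a binary string `s`. -/
def substrings (s : List Bool) : List (List Bool) :=
  (List.range s.length).flatMap
    (fun i => (List.range (s.length - i)).map (fun j => (s.drop i).take (j + 1)))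

/-- The composition multiset `C(s)`: for each nonempty substring, the pair
`(number of 0s, number of 1s)`. -/
def compMultiset (s : List Bool) : Multiset (ℕ × ℕ) :=
  ((substrings s).map (fun u => (u.count false, u.count true)) : List (ℕ × ℕ))

/-- `corruptBy t N M` holds when `M` is obtained from `N` by at most `t`
composition errors: at most `t` elements of `N` are each replaced by an arbitrary
composition of the same length (`z' + w' = z + w`). -/
def corruptBy (t : ℕ) (N M : Multiset (ℕ × ℕ)) : Prop :=
  ∃ P : Multiset ((ℕ × ℕ) × (ℕ × ℕ)),
    P.card ≤ t ∧
    P.map Prod.fst ≤ N ∧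
    (∀ p ∈ P, p.1.1 + p.1.2 = p.2.1 + p.2.2) ∧
    M = N - P.map Prod.fst + P.map Prod.snd

namespace CC

def pre (k : ℕ) (s : List Bool) : ℕ := (s.take k).count true
def suf (k : ℕ) (s : List Bool) : ℕ := (s.drop (s.length - k)).count true
def comp (u : List Bool) : ℕ × ℕ := (u.count false, u.count true)
def Fl (l : ℕ) (N : Multiset (ℕ × ℕ)) : Multiset (ℕ × ℕ) := N.filter (fun p => p.1 + p.2 = l)

lemma count_fb (u : List Bool) : u.count false + u.count true = u.length := by
  rw [Nat.add_comm]; exact List.count_true_add_count_false u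

lemma comp_sum (u : List Bool) : (comp u).1 + (comp u).2 = u.length := count_fb u

lemma win_len (s : List Bool) (j l : ℕ) (h : j + l ≤ s.length) :
    ((s.drop j).take l).length = l := by
  simp [List.length_take, List.length_drop]; omega

lemma range_filter_eq (N c : ℕ) :
    (List.range N).filter (fun j => j = c) = if c < N then [c] else [] := by
  induction N with
  | zero => simp
  | succ N ih =>
    rw [List.range_succ, List.filter_append, ih]
    by_cases h : c < N
    · simp [h, Nat.lt_succ_of_lt h]
      intro hc; omega
    · by_cases h2 : N = c
      · subst h2; simp [h, Nat.lt_succ_self]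
      · have : ¬ c < N + 1 := by omega
        simp [h, h2, this]

lemma flatMap_if_lt (N M : ℕ) (g : ℕ → List Bool) (h : M ≤ N) :
    ((List.range N).flatMap (fun i => if i < M then [g i] else [])) =
      (List.range M).map g := by
  obtain ⟨d, rfl⟩ := Nat.exists_eq_add_of_le h
  rw [List.range_add, List.flatMap_append]
  have h1 : ((List.range M).flatMap (fun i => if i < M then [g i] else []))
      = (List.range M).map g := by
    rw [List.flatMap_def]
    have : List.map (fun i => if i < M then [g i] else []) (List.range M)
        = List.map (fun i => [g i]) (List.range M) := by
      apply List.map_congr_left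
      intro a ha
      rw [List.mem_range] at ha
      simp [ha]
    rw [this, ← List.flatMap_def, ← List.map_eq_flatMap]
  have h2 : ((List.map (fun x => M + x) (List.range d)).flatMap
      (fun i => if i < M then [g i] else [])) = [] := by
    rw [List.flatMap_def, List.flatten_eq_nil_iff]
    intro l hl
    simp only [List.map_map, List.mem_map] at hl
    obtain ⟨x, hx, rfl⟩ := hl
    simp
  rw [h1, h2, List.append_nil]
  

lemma flatMap_if_cond (N M : ℕ) (g : ℕ → List Bool) (c : ℕ → Prop) [DecidablePred c]
    (h : M ≤ N) (hc : ∀ i < N, (c i ↔ i < M)) :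
    ((List.range N).flatMap (fun i => if c i then [g i] else [])) = (List.range M).map g := by
  rw [← flatMap_if_lt N M g h, List.flatMap_def, List.flatMap_def]
  congr 1
  apply List.map_congr_left
  intro i hi
  rw [List.mem_range] at hi
  by_cases hci : c i
  · rw [if_pos hci, if_pos ((hc i hi).1 hci)]
  · rw [if_neg hci, if_neg (fun hlt => hci ((hc i hi).2 hlt))]

lemma Fl_comp (s : List Bool) (n l : ℕ) (hs : s.length = n) (h1 : 1 ≤ l) (h2 : l ≤ n) :
    Fl l (compMultiset s) =
      ((List.range (n - l + 1)).map (fun j => comp ((s.drop j).take l)) : List (ℕ × ℕ)) := by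
  unfold Fl compMultiset
  rw [show Multiset.filter (fun p : ℕ × ℕ => p.1 + p.2 = l)
        (↑((substrings s).map (fun u => (u.count false, u.count true))))
      = ↑(((substrings s).map (fun u => (u.count false, u.count true))).filter
          (fun p => decide (p.1 + p.2 = l))) from rfl]
  congr 1
  rw [List.filter_map]
  have hfc : ((substrings s).filter ((fun p : ℕ×ℕ => decide (p.1 + p.2 = l)) ∘
      (fun u => (u.count false, u.count true))))
      = ((substrings s).filter (fun u => decide (u.length = l))) := by
    apply List.filter_congr
    intro u _
    simp only [Function.comp_apply, decide_eq_decide]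
    rw [count_fb]
  rw [hfc]
  unfold substrings
  rw [hs, List.filter_flatMap]
  have hinner : ∀ i ∈ List.range n,
      List.filter (fun u => decide (u.length = l))
        ((List.range (n - i)).map (fun j => (s.drop i).take (j + 1)))
      = if l - 1 < n - i then [(s.drop i).take l] else [] := by
    intro i hi
    rw [List.mem_range] at hi
    rw [List.filter_map]
    have : ((List.range (n - i)).filter ((fun u => decide (u.length = l)) ∘
        (fun j => (s.drop i).take (j + 1))))
        = ((List.range (n - i)).filter (fun j => decide (j = l - 1))) := by
      apply List.filter_congr
      intro j hj
      rw [List.mem_range] at hj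
      simp only [Function.comp_apply, decide_eq_decide]
      rw [List.length_take, List.length_drop, hs]
      omega
    rw [this, range_filter_eq]
    by_cases hlt : l - 1 < n - i
    · rw [if_pos hlt, if_pos hlt]
      simp only [List.map_cons, List.map_nil]
      congr 2
      omega
    · rw [if_neg hlt, if_neg hlt, List.map_nil]
  have hfl : ((List.range n).flatMap fun i =>
          List.filter (fun u => decide (u.length = l))
            ((List.range (n - i)).map fun j => (s.drop i).take (j + 1)))
      = (List.range (n - l + 1)).map (fun j => (s.drop j).take l) := by
    calc ((List.range n).flatMap fun i =>
            List.filter (fun u => decide (u.length = l))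
              ((List.range (n - i)).map fun j => (s.drop i).take (j + 1)))
        = ((List.range n).flatMap fun i => if l - 1 < n - i then [(s.drop i).take l] else []) := by
          rw [List.flatMap_def, List.flatMap_def]
          congr 1
          exact List.map_congr_left hinner
      _ = (List.range (n - l + 1)).map (fun j => (s.drop j).take l) := by
          apply flatMap_if_cond
          · omega
          · intro i hi; omega
  rw [hfl, List.map_map]
  rfl


lemma pre_zero (s : List Bool) : pre 0 s = 0 := by simp [pre]

lemma suf_zero (s : List Bool) : suf 0 s = 0 := by
  simp [suf, List.drop_length]

lemma pre_le (k : ℕ) (s : List Bool) : pre k s ≤ k :=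
  le_trans List.count_le_length (List.length_take_le _ _)

lemma suf_le (k : ℕ) (s : List Bool) : suf k s ≤ k := by
  refine le_trans List.count_le_length ?_
  rw [List.length_drop]
  omega

lemma pre_le_wt (k : ℕ) (s : List Bool) : pre k s ≤ s.count true :=
  List.Sublist.count_le _ (List.take_sublist _ _)

lemma wt_split (s : List Bool) (n j l r : ℕ) (hs : s.length = n) (h : j + l + r = n) :
    s.count true = pre j s + ((s.drop j).take l).count true + suf r s := by
  unfold pre suf
  have h1 : s.count true = (s.take j).count true + (s.drop j).count true := by
    conv_lhs => rw [← List.take_append_drop j s]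
    rw [List.count_append]
  have h2 : (s.drop j).count true
      = ((s.drop j).take l).count true + ((s.drop j).drop l).count true := by
    conv_lhs => rw [← List.take_append_drop l (s.drop j)]
    rw [List.count_append]
  have h3 : (s.drop j).drop l = s.drop (s.length - r) := by
    rw [List.drop_drop]
    congr 1
    omega
  rw [h3] at h2
  omega

lemma take_count_succ (s : List Bool) (i : ℕ) (h : i < s.length) :
    (s.take (i+1)).count true = (s.take i).count true + (if s[i] then 1 else 0) := by
  rw [List.take_succ, List.count_append, List.getElem?_eq_getElem h]
  cases hs : s[i] <;> simp

lemma drop_count_succ (s : List Bool) (i : ℕ) (h : i < s.length) :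
    (s.drop i).count true = (if s[i] then 1 else 0) + (s.drop (i+1)).count true := by
  rw [List.drop_eq_getElem_cons h, List.count_cons]
  cases hs : s[i] <;> simp [hs] <;> omega

lemma ext_pre_suf (n : ℕ) (a b : List Bool) (ha : a.length = n) (hb : b.length = n)
    (hp : ∀ k ≤ (n+1)/2, pre k a = pre k b) (hsf : ∀ k ≤ (n+1)/2, suf k a = suf k b) :
    a = b := by
  apply List.ext_getElem (by omega)
  intro i h1 h2
  by_cases hi : i < (n+1)/2
  · have e1 := hp i (by omega)
    have e2 := hp (i+1) (by omega)
    unfold pre at e1 e2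
    rw [take_count_succ a i h1, take_count_succ b i h2] at e2
    cases hA : a[i] <;> cases hB : b[i] <;> simp [hA, hB] at e2 ⊢ <;> omega
  · have hiK : n - i ≤ (n+1)/2 := by omega
    have e1 := hsf (n-i) hiK
    have e2 := hsf (n-i-1) (by omega)
    unfold suf at e1 e2
    rw [ha, hb] at e1 e2
    have hni : n - (n - i) = i := by omega
    have hni2 : n - (n - i - 1) = i + 1 := by omega
    rw [hni] at e1
    rw [hni2] at e2
    rw [drop_count_succ a i h1, drop_count_succ b i h2] at e1
    cases hA : a[i] <;> cases hB : b[i] <;> simp [hA, hB] at e1 ⊢ <;> omega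

lemma pair_eq {x y z w : ℕ × ℕ} (h : (x ::ₘ y ::ₘ 0 : Multiset (ℕ × ℕ)) = z ::ₘ w ::ₘ 0) :
    (x = z ∧ y = w) ∨ (x = w ∧ y = z) := by
  rw [Multiset.cons_eq_cons] at h
  rcases h with ⟨h1, h2⟩ | ⟨hne, cs, h1, h2⟩
  · left
    refine ⟨h1, ?_⟩
    rw [Multiset.cons_zero, Multiset.cons_zero, Multiset.singleton_inj] at h2
    exact h2
  · right
    rw [Multiset.cons_zero, Multiset.singleton_eq_cons_iff] at h1
    obtain ⟨hyz, hcs⟩ := h1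
    subst hcs
    rw [Multiset.cons_zero, Multiset.cons_zero, Multiset.singleton_inj] at h2
    exact ⟨h2.symm, hyz⟩

lemma msplit (k : ℕ) (hk : 1 ≤ k) (f : ℕ → ℕ × ℕ) :
    (↑(List.map f (List.range (k+1))) : Multiset (ℕ × ℕ))
      = f 0 ::ₘ f k ::ₘ ↑(List.map (f ∘ Nat.succ) (List.range (k-1))) := by
  have h1 : List.range (k+1) = 0 :: (List.map Nat.succ (List.range (k-1)) ++ [k]) := by
    rw [List.range_succ_eq_map]
    congr 1
    have hk2 : k = (k-1)+1 := by omega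
    conv_lhs => rw [hk2, List.range_succ, List.map_append]
    simp only [List.map_cons, List.map_nil]
    congr 2
    omega
  rw [h1]
  simp [Multiset.cons_swap, List.map_append, List.map_map]

lemma recon (n : ℕ) (h3 : 3 ≤ n) (a b : List Bool) (ha : a.length = n) (hb : b.length = n)
    (hma : ∀ k ≤ (n+1)/2, suf k a ≤ pre k a) (hmb : ∀ k ≤ (n+1)/2, suf k b ≤ pre k b)
    (hw : a.count true = b.count true)
    (hk : ∀ k, 1 ≤ k → k ≤ (n+1)/2 →
      (pre k a = pre k b ∧ suf k a = suf k b) ∨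
        Fl (n-k) (compMultiset a) = Fl (n-k) (compMultiset b)) :
    a = b := by
  have main : ∀ k, k ≤ (n+1)/2 → pre k a = pre k b ∧ suf k a = suf k b := by
    intro k
    induction k using Nat.strong_induction_on with
    | _ k IH =>
      intro hkK
      rcases Nat.eq_zero_or_pos k with rfl | hk1
      · exact ⟨by rw [pre_zero, pre_zero], by rw [suf_zero, suf_zero]⟩
      rcases hk k hk1 hkK with hgood | hFl
      · exact hgood
      have hl1 : 1 ≤ n - k := by omega
      have hl2 : n - k ≤ n := by omega
      have hkn : n - (n - k) + 1 = k + 1 := by omega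
      rw [Fl_comp a n (n-k) ha hl1 hl2, Fl_comp b n (n-k) hb hl1 hl2, hkn] at hFl
      set l := n - k with hldef
      set fa : ℕ → ℕ × ℕ := fun j => comp ((a.drop j).take l) with hfa
      set fb : ℕ → ℕ × ℕ := fun j => comp ((b.drop j).take l) with hfb
      rw [msplit k hk1 fa, msplit k hk1 fb] at hFl
      -- middles are equal
      have hMid : (List.map (fa ∘ Nat.succ) (List.range (k-1)))
          = (List.map (fb ∘ Nat.succ) (List.range (k-1))) := by
        apply List.map_congr_left
        intro j hj
        rw [List.mem_range] at hj
        have hj1 : j + 1 < k := by omega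
        have hIH1 := IH (j+1) hj1 (by omega)
        have hIH2 := IH (k-j-1) (by omega) (by omega)
        have hwa := wt_split a n (j+1) l (k-j-1) ha (by omega)
        have hwb := wt_split b n (j+1) l (k-j-1) hb (by omega)
        have hlen_a : ((a.drop (j+1)).take l).length = l := win_len a (j+1) l (by omega)
        have hlen_b : ((b.drop (j+1)).take l).length = l := win_len b (j+1) l (by omega)
        have hca := count_fb ((a.drop (j+1)).take l)
        have hcb := count_fb ((b.drop (j+1)).take l)
        simp only [Function.comp_apply, hfa, hfb]
        unfold comp
        have hc1 : ((a.drop (j+1)).take l).count true = ((b.drop (j+1)).take l).count true := by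
          omega
        have hc0 : ((a.drop (j+1)).take l).count false = ((b.drop (j+1)).take l).count false := by
          omega
        rw [Nat.succ_eq_add_one, hc1, hc0]
      rw [hMid] at hFl
      have hpair : (fa 0 ::ₘ fa k ::ₘ 0 : Multiset (ℕ × ℕ)) = fb 0 ::ₘ fb k ::ₘ 0 := by
        have h2 : (fa 0 ::ₘ fa k ::ₘ 0) + ↑(List.map (fb ∘ Nat.succ) (List.range (k-1)))
            = (fb 0 ::ₘ fb k ::ₘ 0) + ↑(List.map (fb ∘ Nat.succ) (List.range (k-1))) := by
          simpa [Multiset.cons_add] using hFl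
        exact add_right_cancel h2
      -- end windows
      have ea0 := wt_split a n 0 l k ha (by omega)
      have eak := wt_split a n k l 0 ha (by omega)
      have eb0 := wt_split b n 0 l k hb (by omega)
      have ebk := wt_split b n k l 0 hb (by omega)
      simp only [pre_zero, suf_zero] at ea0 eak eb0 ebk
      have hfa0 : (fa 0).2 = ((a.drop 0).take l).count true := rfl
      have hfak : (fa k).2 = ((a.drop k).take l).count true := rfl
      have hfb0 : (fb 0).2 = ((b.drop 0).take l).count true := rfl
      have hfbk : (fb k).2 = ((b.drop k).take l).count true := rfl
      have hmak := hma k hkK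
      have hmbk := hmb k hkK
      rcases pair_eq hpair with ⟨h1, h2⟩ | ⟨h1, h2⟩
      · have h1' : (fa 0).2 = (fb 0).2 := by rw [h1]
        have h2' : (fa k).2 = (fb k).2 := by rw [h2]
        rw [hfa0, hfb0] at h1'
        rw [hfak, hfbk] at h2'
        constructor <;> omega
      · have h1' : (fa 0).2 = (fb k).2 := by rw [h1]
        have h2' : (fa k).2 = (fb 0).2 := by rw [h2]
        rw [hfa0, hfbk] at h1'
        rw [hfak, hfb0] at h2'
        constructor <;> omega
  exact ext_pre_suf n a b ha hb (fun k hkK => (main k hkK).1) (fun k hkK => (main k hkK).2)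


lemma corrupt_Fl {t : ℕ} {N M : Multiset (ℕ × ℕ)} (h : corruptBy t N M) :
    ∃ Ls : Multiset ℕ, Multiset.card Ls ≤ t ∧ ∀ l, l ∉ Ls → Fl l M = Fl l N := by
  obtain ⟨P, hc, hle, hlen, rfl⟩ := h
  refine ⟨P.map (fun p => p.1.1 + p.1.2), by simpa using hc, ?_⟩
  intro l hl
  unfold Fl
  rw [Multiset.filter_add, Multiset.filter_sub]
  have h1 : Multiset.filter (fun p : ℕ × ℕ => p.1 + p.2 = l) (P.map Prod.fst) = 0 := by
    rw [Multiset.filter_eq_nil]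
    intro q hq
    rw [Multiset.mem_map] at hq
    obtain ⟨p, hp, rfl⟩ := hq
    intro hpl
    exact hl (by
      rw [Multiset.mem_map]
      exact ⟨p, hp, hpl⟩)
  have h2 : Multiset.filter (fun p : ℕ × ℕ => p.1 + p.2 = l) (P.map Prod.snd) = 0 := by
    rw [Multiset.filter_eq_nil]
    intro q hq
    rw [Multiset.mem_map] at hq
    obtain ⟨p, hp, rfl⟩ := hq
    intro hpl
    exact hl (by
      rw [Multiset.mem_map]
      exact ⟨p, hp, by rw [hlen p hp]; exact hpl⟩)
  rw [h1, h2, Multiset.sub_zero, add_zero]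

/-- The set of "bad" indices `k` where the length-`(n-k)` slices differ. -/
def dS (n K : ℕ) (c s' : List Bool) : Finset ℕ :=
  (Finset.Icc 1 K).filter (fun k => Fl (n - k) (compMultiset s') ≠ Fl (n - k) (compMultiset c))

lemma dS_card {n K t : ℕ} (hK : K ≤ n) (c s' : List Bool)
    (hM : ∃ M, corruptBy t (compMultiset c) M ∧ corruptBy t (compMultiset s') M) :
    (dS n K c s').card ≤ 2 * t := by
  obtain ⟨M, h1, h2⟩ := hM
  obtain ⟨L1, hL1, hF1⟩ := corrupt_Fl h1
  obtain ⟨L2, hL2, hF2⟩ := corrupt_Fl h2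
  classical
  have hsub : (dS n K c s').card ≤ (L1 + L2).toFinset.card := by
    apply Finset.card_le_card_of_injOn (fun k => n - k)
    · intro k hk
      rw [Finset.mem_coe, dS, Finset.mem_filter, Finset.mem_Icc] at hk
      obtain ⟨⟨hk1, hk2⟩, hkne⟩ := hk
      rw [Finset.mem_coe, Multiset.mem_toFinset, Multiset.mem_add]
      by_contra hcon
      push_neg at hcon
      exact hkne ((hF2 _ hcon.2).symm.trans (hF1 _ hcon.1))
    · intro x hx y hy hxy
      rw [Finset.mem_coe, dS, Finset.mem_filter, Finset.mem_Icc] at hx hy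
      have hxy' : n - x = n - y := hxy
      omega
  calc (dS n K c s').card ≤ (L1 + L2).toFinset.card := hsub
    _ ≤ Multiset.card (L1 + L2) := Multiset.toFinset_card_le _
    _ ≤ 2 * t := by rw [Multiset.card_add]; omega

lemma mul_add_lt {a A b B : ℕ} (ha : a < A) (hb : b < B) : a * B + b < A * B := by
  calc a * B + b < a * B + B := by omega
    _ = (a + 1) * B := by ring
    _ ≤ A * B := Nat.mul_le_mul_right B ha

lemma split_pack {K u v u' v' : ℕ} (hv : v ≤ K) (hv' : v' ≤ K)
    (h : u * (K + 1) + v = u' * (K + 1) + v') : u = u' ∧ v = v' := by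
  have h1 : (u * (K + 1) + v) / (K + 1) = u := by
    rw [Nat.mul_comm u, Nat.mul_add_div (by omega), Nat.div_eq_of_lt (by omega)]
    omega
  have h2 : (u' * (K + 1) + v') / (K + 1) = u' := by
    rw [Nat.mul_comm u', Nat.mul_add_div (by omega), Nat.div_eq_of_lt (by omega)]
    omega
  have huu : u = u' := by rw [← h1, ← h2, h]
  refine ⟨huu, ?_⟩
  rw [huu] at h
  omega

lemma pack_inj {K k p q k' p' q' : ℕ} (hk : k ≤ K) (hp : p ≤ k) (hq : q ≤ k)
    (hk' : k' ≤ K) (hp' : p' ≤ k') (hq' : q' ≤ k')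
    (h : (k * (K + 1) + p) * (K + 1) + q = (k' * (K + 1) + p') * (K + 1) + q') :
    k = k' ∧ p = p' ∧ q = q' := by
  obtain ⟨h1, h2⟩ := split_pack (by omega) (by omega) h
  obtain ⟨h3, h4⟩ := split_pack (by omega) (by omega) h1
  exact ⟨h3, h4, h2⟩

/-- Packing of `(k, pre k s, suf k s)` into a single `Fin`. -/
def gp (K : ℕ) (s' : List Bool) (k : ℕ) : Fin ((K + 1) ^ 3) :=
  if h : k ≤ K then
    ⟨(k * (K + 1) + pre k s') * (K + 1) + suf k s', by
      have h1 : k * (K + 1) + pre k s' < (K + 1) * (K + 1) :=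
        mul_add_lt (by omega) (by have := pre_le k s'; omega)
      have h2 : (k * (K + 1) + pre k s') * (K + 1) + suf k s' < ((K + 1) * (K + 1)) * (K + 1) :=
        mul_add_lt h1 (by have := suf_le k s'; omega)
      calc _ < ((K + 1) * (K + 1)) * (K + 1) := h2
        _ = (K + 1) ^ 3 := by ring⟩
  else ⟨0, by positivity⟩

/-- Robust encoding of a string relative to reference `c`. -/
def encode (n K t : ℕ) (c s' : List Bool) :
    Fin (n + 1) × (Fin (2 * t) → Option (Fin ((K + 1) ^ 3))) :=
  (if h : s'.count true ≤ n then ⟨s'.count true, by omega⟩ else ⟨0, by omega⟩,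
   fun i => (((dS n K c s').sort (· ≤ ·))[(i : ℕ)]?).map (gp K s'))

lemma gp_eq_elim {K : ℕ} {a b : List Bool} {k k' : ℕ} (hk : 1 ≤ k) (hkK : k ≤ K)
    (hk' : 1 ≤ k') (hkK' : k' ≤ K) (h : gp K a k = gp K b k') :
    k = k' ∧ pre k a = pre k' b ∧ suf k a = suf k' b := by
  unfold gp at h
  rw [dif_pos hkK, dif_pos hkK'] at h
  have hval := congrArg Fin.val h
  simp only at hval
  exact pack_inj hkK (pre_le k a) (suf_le k a) hkK' (pre_le k' b) (suf_le k' b) hval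

lemma encode_inj (n t : ℕ) (h3 : 3 ≤ n) (c a b : List Bool)
    (ha : a.length = n) (hb : b.length = n)
    (hma : ∀ k ≤ (n + 1) / 2, suf k a ≤ pre k a)
    (hmb : ∀ k ≤ (n + 1) / 2, suf k b ≤ pre k b)
    (hca : (dS n ((n + 1) / 2) c a).card ≤ 2 * t)
    (hcb : (dS n ((n + 1) / 2) c b).card ≤ 2 * t)
    (henc : encode n ((n + 1) / 2) t c a = encode n ((n + 1) / 2) t c b) :
    a = b := by
  set K := (n + 1) / 2 with hKdef
  have h1 : (encode n K t c a).1 = (encode n K t c b).1 := by rw [henc]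
  have h2 : ∀ i : Fin (2 * t), (encode n K t c a).2 i = (encode n K t c b).2 i := by
    rw [henc]
    intro i
    rfl
  have hwA : a.count true ≤ n := ha ▸ (List.count_le_length (a := true) (l := a))
  have hwB : b.count true ≤ n := hb ▸ (List.count_le_length (a := true) (l := b))
  have hw : a.count true = b.count true := by
    unfold encode at h1
    rw [dif_pos hwA, dif_pos hwB] at h1
    simpa using h1
  set sa := (dS n K c a).sort (· ≤ ·) with hsa
  set sb := (dS n K c b).sort (· ≤ ·) with hsb
  have hlena : sa.length ≤ 2 * t := by rw [hsa, Finset.length_sort]; exact hca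
  have hlenb : sb.length ≤ 2 * t := by rw [hsb, Finset.length_sort]; exact hcb
  have hfun : ∀ i : Fin (2 * t), (sa[(i : ℕ)]?).map (gp K a) = (sb[(i : ℕ)]?).map (gp K b) := by
    intro i
    have := h2 i
    unfold encode at this
    simpa using this
  have hbda : ∀ k ∈ dS n K c a, 1 ≤ k ∧ k ≤ K := by
    intro k hk
    rw [dS, Finset.mem_filter, Finset.mem_Icc] at hk
    exact hk.1
  have hbdb : ∀ k ∈ dS n K c b, 1 ≤ k ∧ k ≤ K := by
    intro k hk
    rw [dS, Finset.mem_filter, Finset.mem_Icc] at hk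
    exact hk.1
  have hll : sa.length = sb.length := by
    by_contra hne
    rcases Nat.lt_or_ge sa.length sb.length with hlt | hge
    · have := hfun ⟨sa.length, lt_of_lt_of_le hlt hlenb⟩
      rw [List.getElem?_eq_none (le_refl _), List.getElem?_eq_getElem hlt] at this
      simp at this
    · have hlt : sb.length < sa.length := by omega
      have := hfun ⟨sb.length, lt_of_lt_of_le hlt hlena⟩
      rw [List.getElem?_eq_none (le_refl _), List.getElem?_eq_getElem hlt] at this
      simp at this
  have hsab : sa = sb := by
    apply List.ext_getElem hll
    intro i hia hib
    have := hfun ⟨i, lt_of_lt_of_le hia hlena⟩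
    rw [List.getElem?_eq_getElem hia, List.getElem?_eq_getElem hib] at this
    simp only [Option.map_some, Option.some.injEq] at this
    have hmA : sa[i] ∈ sa := List.getElem_mem hia
    have hmB : sb[i] ∈ sb := List.getElem_mem hib
    have hA := hbda _ ((Finset.mem_sort (r := (· ≤ ·))).1 hmA)
    have hB := hbdb _ ((Finset.mem_sort (r := (· ≤ ·))).1 hmB)
    exact (gp_eq_elim hA.1 hA.2 hB.1 hB.2 this).1
  have hE : dS n K c a = dS n K c b := by
    have e1 := Finset.sort_toFinset (dS n K c a) (· ≤ ·)
    have e2 := Finset.sort_toFinset (dS n K c b) (· ≤ ·)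
    rw [← e1, ← e2, ← hsa, ← hsb, hsab]
  apply recon n h3 a b ha hb hma hmb hw
  intro k hk1 hkK
  by_cases hkE : k ∈ dS n K c a
  · left
    have hkmem : k ∈ sa := by rw [hsa, Finset.mem_sort]; exact hkE
    obtain ⟨i, hieq⟩ := List.getElem?_of_mem hkmem
    have hia : i < sa.length := by
      rw [List.getElem?_eq_some_iff] at hieq
      exact hieq.1
    have hi2 : i < 2 * t := lt_of_lt_of_le hia hlena
    have := hfun ⟨i, hi2⟩
    rw [hieq, ← hsab, hieq] at this
    simp only [Option.map_some, Option.some.injEq] at this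
    exact (gp_eq_elim hk1 hkK hk1 hkK this).2
  · right
    have hkE' : k ∉ dS n K c b := by rw [← hE]; exact hkE
    rw [dS, Finset.mem_filter] at hkE hkE'
    have hIcc : k ∈ Finset.Icc 1 K := by rw [Finset.mem_Icc]; exact ⟨hk1, hkK⟩
    push_neg at hkE hkE'
    exact (hkE hIcc).trans (hkE' hIcc).symm


lemma ball_card (n t : ℕ) (h3 : 3 ≤ n) (c : List Bool) (S : Finset (List Bool))
    (hS : ∀ s ∈ S, s.length = n ∧ ∀ k ≤ (n + 1) / 2, suf k s ≤ pre k s) :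
    (S.filter (fun s' => (dS n ((n + 1) / 2) c s').card ≤ 2 * t)).card
      ≤ (n + 1) * (((n + 1) / 2 + 1) ^ 3 + 1) ^ (2 * t) := by
  classical
  have hinj : Set.InjOn (encode n ((n + 1) / 2) t c)
      ↑(S.filter (fun s' => (dS n ((n + 1) / 2) c s').card ≤ 2 * t)) := by
    intro a hA b hB henc
    rw [Finset.mem_coe, Finset.mem_filter] at hA hB
    obtain ⟨hga, hca⟩ := hA
    obtain ⟨hgb, hcb⟩ := hB
    obtain ⟨hla, hma⟩ := hS a hga
    obtain ⟨hlb, hmb⟩ := hS b hgb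
    exact encode_inj n t h3 c a b hla hlb hma hmb hca hcb henc
  have hcard := Finset.card_le_card_of_injOn (encode n ((n + 1) / 2) t c)
    (fun a _ => Finset.mem_univ _) hinj
  calc _ ≤ (Finset.univ : Finset (Fin (n + 1) × (Fin (2 * t) →
          Option (Fin (((n + 1) / 2 + 1) ^ 3))))).card := hcard
    _ = (n + 1) * (((n + 1) / 2 + 1) ^ 3 + 1) ^ (2 * t) := by
        rw [Finset.card_univ]
        simp [Fintype.card_fun]

lemma greedy {α : Type} [DecidableEq α] (S : Finset α) (R : α → α → Prop)
    [DecidableRel R]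
    (hrefl : ∀ a ∈ S, R a a) (hsymm : ∀ a b, R a b → R b a)
    (ball : α → Finset α) (B : ℕ)
    (hball : ∀ c ∈ S, ∀ s ∈ S, R c s → s ∈ ball c)
    (hB : ∀ c ∈ S, (ball c).card ≤ B) :
    ∃ C : Finset α, C ⊆ S ∧ (∀ x ∈ C, ∀ y ∈ C, x ≠ y → ¬ R x y) ∧ S.card ≤ C.card * B := by
  let F := S.powerset.filter (fun D => ∀ x ∈ D, ∀ y ∈ D, x ≠ y → ¬ R x y)
  have hne : F.Nonempty := ⟨∅, by simp [F]⟩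
  obtain ⟨C, hCF, hmax⟩ := F.exists_max_image Finset.card hne
  rw [Finset.mem_filter, Finset.mem_powerset] at hCF
  obtain ⟨hCS, hind⟩ := hCF
  refine ⟨C, hCS, hind, ?_⟩
  have hcover : ∀ s ∈ S, ∃ c ∈ C, R c s := by
    intro s hs
    by_contra hcon
    push_neg at hcon
    have hsC : s ∉ C := fun hsC => (hcon s hsC) (hrefl s hs)
    have hins : insert s C ∈ F := by
      rw [Finset.mem_filter, Finset.mem_powerset]
      refine ⟨Finset.insert_subset hs hCS, ?_⟩
      intro x hx y hy hxy
      rw [Finset.mem_insert] at hx hy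
      rcases hx with rfl | hx
      · rcases hy with rfl | hy
        · exact absurd rfl hxy
        · exact fun hR => (hcon y hy) (hsymm _ _ hR)
      · rcases hy with rfl | hy
        · exact hcon x hx
        · exact hind x hx y hy hxy
    have := hmax _ hins
    rw [Finset.card_insert_of_notMem hsC] at this
    omega
  have hsub : S ⊆ C.biUnion ball := by
    intro s hs
    rw [Finset.mem_biUnion]
    obtain ⟨c, hc, hR⟩ := hcover s hs
    exact ⟨c, hc, hball c (hCS hc) s hs hR⟩
  calc S.card ≤ (C.biUnion ball).card := Finset.card_le_card hsub
    _ ≤ ∑ c ∈ C, (ball c).card := Finset.card_biUnion_le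
    _ ≤ ∑ _c ∈ C, B := Finset.sum_le_sum (fun c hc => hB c (hCS hc))
    _ = C.card * B := by rw [Finset.sum_const, smul_eq_mul]

/-! ### The Dyck-word based margin class -/

open DyckStep

def unpair : List DyckStep → List (Bool × Bool)
  | x :: y :: rest => (decide (x = U), decide (y = U)) :: unpair rest
  | _ => []

lemma unpair_length : ∀ d : List DyckStep, (unpair d).length = d.length / 2
  | [] => rfl
  | [_] => by simp [unpair]
  | x :: y :: rest => by
    rw [unpair, List.length_cons, unpair_length rest]
    simp only [List.length_cons]
    omega

lemma count_UD : ∀ l : List DyckStep, l.count U + l.count D = l.length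
  | [] => rfl
  | x :: l => by
    rw [List.count_cons, List.count_cons, List.length_cons]
    have := count_UD l
    cases x <;> simp <;> omega

lemma unpair_count : ∀ (k : ℕ) (d : List DyckStep), 2 * k ≤ d.length →
    (d.take (2 * k)).count U
      = (((unpair d).take k).map Prod.fst).count true
        + (((unpair d).take k).map Prod.snd).count true
  | 0, d, _ => by simp
  | (k+1), [], h => by simp at h
  | (k+1), [x], h => by simp at h; omega
  | (k+1), x :: y :: rest, h => by
    have hlen : 2 * k ≤ rest.length := by
      simp only [List.length_cons] at h
      omega
    have hr := unpair_count k rest hlen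
    have h2 : 2 * (k + 1) = (2 * k) + 1 + 1 := by ring
    rw [unpair, h2]
    rw [List.take_succ_cons, List.take_succ_cons, List.take_succ_cons]
    rw [List.count_cons, List.count_cons, List.map_cons, List.map_cons,
      List.count_cons, List.count_cons]
    simp only [List.length_cons] at h
    rw [List.map_take, List.map_take] at hr
    cases x <;> cases y <;> simp <;> omega

lemma count_not_map : ∀ M : List (Bool × Bool),
    ((M.map (fun p => !p.2)).count true) + ((M.map Prod.snd).count true) = M.length
  | [] => rfl
  | p :: M => by
    rw [List.map_cons, List.map_cons, List.count_cons, List.count_cons, List.length_cons]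
    have := count_not_map M
    cases hp : p.2 <;> simp [hp] <;> omega

def pairsToStr (n : ℕ) (L : List (Bool × Bool)) : List Bool :=
  (L.map Prod.fst) ++ List.replicate (n - 2 * L.length) false ++ ((L.map (fun p => !p.2)).reverse)

lemma pairsToStr_length (n : ℕ) (L : List (Bool × Bool)) (h : 2 * L.length ≤ n) :
    (pairsToStr n L).length = n := by
  simp [pairsToStr]
  omega

lemma pairsToStr_take (n : ℕ) (L : List (Bool × Bool)) (k : ℕ) (hk : k ≤ L.length) :
    (pairsToStr n L).take k = (L.take k).map Prod.fst := by
  unfold pairsToStr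
  rw [List.take_append_of_le_length (by simp; omega),
    List.take_append_of_le_length (by simp; omega), List.map_take]

lemma pairsToStr_pre (n : ℕ) (L : List (Bool × Bool)) (k : ℕ) (hk : k ≤ L.length) :
    pre k (pairsToStr n L) = ((L.take k).map Prod.fst).count true := by
  unfold pre
  rw [pairsToStr_take n L k hk]

lemma pairsToStr_drop (n : ℕ) (L : List (Bool × Bool)) (h : 2 * L.length ≤ n) :
    (pairsToStr n L).drop (n - L.length) = (L.map (fun p => !p.2)).reverse := by
  unfold pairsToStr
  have hlen : ((L.map Prod.fst) ++ List.replicate (n - 2 * L.length) false).length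
      = n - L.length := by
    simp
    omega
  rw [← hlen, List.drop_left]

lemma pairsToStr_suf (n : ℕ) (L : List (Bool × Bool)) (h : 2 * L.length ≤ n)
    (k : ℕ) (hk : k ≤ L.length) :
    suf k (pairsToStr n L) = ((L.take k).map (fun p => !p.2)).count true := by
  unfold suf
  rw [pairsToStr_length n L h]
  set m := L.length with hm
  have hns : n - k = (n - m) + (m - k) := by omega
  have hlen : ((L.map Prod.fst) ++ List.replicate (n - 2 * m) false).length = n - m := by
    simp
    omega
  unfold pairsToStr
  rw [hns, ← hlen, List.drop_length_add_append]
  have hrev : ((L.map (fun p => !p.2)).reverse).drop (m - k)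
      = (((L.map (fun p => !p.2)).take k)).reverse := by
    rw [List.reverse_take]
    congr 1
    simp
    omega
  rw [hrev, List.count_reverse, List.map_take]

lemma pairsToStr_margin (n : ℕ) (d : DyckWord) (hd : 2 * d.semilength ≤ n)
    (hn : n ≤ 2 * d.semilength + 1) :
    ∀ k ≤ (n + 1) / 2, suf k (pairsToStr n (unpair d.toList)) ≤
      pre k (pairsToStr n (unpair d.toList)) := by
  set m := d.semilength with hmdef
  set L := unpair d.toList with hLdef
  have hdlen : d.toList.length = 2 * m := (DyckWord.two_mul_semilength_eq_length).symm
  have hL : L.length = m := by rw [hLdef, unpair_length, hdlen]; omega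
  have hmain : ∀ k ≤ m, suf k (pairsToStr n L) ≤ pre k (pairsToStr n L) := by
    intro k hkm
    rw [pairsToStr_pre n L k (by omega), pairsToStr_suf n L (by omega) k (by omega)]
    have hcount := unpair_count k d.toList (by omega)
    have hcnm := count_not_map (L.take k)
    rw [List.map_take, List.map_take] at hcnm
    have hlt : (L.take k).length = k := by simp; omega
    have hUD := d.count_D_le_count_U (2 * k)
    have hsum := count_UD (d.toList.take (2 * k))
    have htk : (d.toList.take (2 * k)).length = 2 * k := by simp; omega
    rw [← hLdef] at hcount
    rw [List.map_take, List.map_take] at hcount ⊢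
    omega
  intro k hk
  by_cases hkm : k ≤ m
  · exact hmain k hkm
  · have hn2 : n = 2 * m + 1 := by omega
    have hk2 : k = m + 1 := by omega
    have hpads : List.replicate (n - 2 * L.length) false = [false] := by
      rw [hL, hn2]
      simp [List.replicate]
    have e1 : (pairsToStr n L).take (m + 1) = (L.map Prod.fst) ++ [false] := by
      unfold pairsToStr
      rw [show m + 1 = ((L.map Prod.fst) ++ List.replicate (n - 2 * L.length) false).length
        from by simp [hL]; omega]
      rw [List.take_left, hpads]
    have e2 : (pairsToStr n L).take m = L.map Prod.fst := by
      have := pairsToStr_take n L m (by omega)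
      rw [this]
      rw [show L.take m = L from by rw [← hL]; exact List.take_length]
    have hpre : pre (m + 1) (pairsToStr n L) = pre m (pairsToStr n L) := by
      unfold pre
      rw [e1, e2, List.count_append]
      simp
    have f1 : (pairsToStr n L).drop (n - (m + 1))
        = List.replicate (n - 2 * L.length) false ++ (L.map (fun p => !p.2)).reverse := by
      unfold pairsToStr
      have hnm : n - (m + 1) = (L.map Prod.fst).length := by simp [hL]; omega
      rw [List.append_assoc, hnm, List.drop_left]
    have f2 : (pairsToStr n L).drop (n - m) = (L.map (fun p => !p.2)).reverse := by
      have := pairsToStr_drop n L (by omega)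
      rw [hL] at this
      exact this
    have hsuf : suf (m + 1) (pairsToStr n L) = suf m (pairsToStr n L) := by
      unfold suf
      rw [pairsToStr_length n L (by omega), f1, f2, List.count_append, hpads]
      simp
    rw [hk2, hpre, hsuf]
    exact hmain m (le_refl m)


lemma pairs_ext : ∀ (L1 L2 : List (Bool × Bool)), L1.map Prod.fst = L2.map Prod.fst →
    L1.map Prod.snd = L2.map Prod.snd → L1 = L2
  | [], [], _, _ => rfl
  | [], _ :: _, h, _ => by simp at h
  | _ :: _, [], h, _ => by simp at h
  | p :: L1, q :: L2, h1, h2 => by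
    simp only [List.map_cons, List.cons.injEq] at h1 h2 ⊢
    exact ⟨Prod.ext h1.1 h2.1, pairs_ext L1 L2 h1.2 h2.2⟩

lemma unpair_inj : ∀ (d1 d2 : List DyckStep), d1.length = d2.length → d1.length % 2 = 0 →
    unpair d1 = unpair d2 → d1 = d2
  | [], [], _, _, _ => rfl
  | [], _ :: _, h, _, _ => by simp at h
  | _ :: _, [], h, _, _ => by simp at h
  | [_], _, h, hpar, _ => by simp at hpar
  | _ :: _ :: _, [_], h, hpar, _ => by simp at h
  | x :: y :: r1, a :: b :: r2, h, hpar, he => by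
    rw [unpair, unpair, List.cons.injEq, Prod.mk.injEq] at he
    obtain ⟨⟨e1, e2⟩, e3⟩ := he
    simp only [List.length_cons] at h hpar
    have hxa : x = a := by cases x <;> cases a <;> simp_all
    have hyb : y = b := by cases y <;> cases b <;> simp_all
    rw [hxa, hyb, unpair_inj r1 r2 (by omega) (by omega) e3]

lemma pairsToStr_inj (n : ℕ) (L1 L2 : List (Bool × Bool)) (hl1 : 2 * L1.length ≤ n)
    (hl : L1.length = L2.length) (h : pairsToStr n L1 = pairsToStr n L2) : L1 = L2 := by
  have hA : L1.map Prod.fst = L2.map Prod.fst := by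
    have e1 := pairsToStr_take n L1 L1.length (le_refl _)
    have e2 := pairsToStr_take n L2 L2.length (le_refl _)
    rw [List.take_length] at e1 e2
    rw [← e1, ← e2, h, hl]
  have hB : L1.map (fun p => !p.2) = L2.map (fun p => !p.2) := by
    have e1 := pairsToStr_drop n L1 hl1
    have e2 := pairsToStr_drop n L2 (by omega)
    rw [← List.reverse_inj, ← e1, ← e2, h, hl]
  have hBsnd : L1.map Prod.snd = L2.map Prod.snd := by
    have := congrArg (List.map not) hB
    simpa [List.map_map, Function.comp_def] using this
  exact pairs_ext L1 L2 hA hBsnd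

def strOfDyck (n : ℕ) (d : DyckWord) : List Bool := pairsToStr n (unpair d.toList)

def S0 (n : ℕ) : Finset (List Bool) :=
  (Finset.univ : Finset {p : DyckWord // p.semilength = n / 2}).image
    (fun d => strOfDyck n d.1)

lemma S0_card (n : ℕ) : (S0 n).card = catalan (n / 2) := by
  rw [S0, Finset.card_image_of_injective _ ?hinj, Finset.card_univ,
    DyckWord.card_dyckWord_semilength_eq_catalan]
  case hinj =>
    intro d1 d2 h
    unfold strOfDyck at h
    have hd1 : d1.1.toList.length = 2 * (n / 2) := by
      rw [← DyckWord.two_mul_semilength_eq_length, d1.2]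
    have hd2 : d2.1.toList.length = 2 * (n / 2) := by
      rw [← DyckWord.two_mul_semilength_eq_length, d2.2]
    have hu1 : (unpair d1.1.toList).length = n / 2 := by rw [unpair_length, hd1]; omega
    have hu2 : (unpair d2.1.toList).length = n / 2 := by rw [unpair_length, hd2]; omega
    have hL := pairsToStr_inj n (unpair d1.1.toList) (unpair d2.1.toList)
      (by rw [hu1]; omega) (by rw [hu1, hu2]) h
    have := unpair_inj d1.1.toList d2.1.toList (by omega) (by omega) hL
    exact Subtype.ext (DyckWord.ext this)

lemma S0_mem (n : ℕ) (s : List Bool) (hs : s ∈ S0 n) :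
    s.length = n ∧ ∀ k ≤ (n + 1) / 2, suf k s ≤ pre k s := by
  rw [S0, Finset.mem_image] at hs
  obtain ⟨d, _, rfl⟩ := hs
  have hd : d.1.toList.length = 2 * (n / 2) := by
    rw [← DyckWord.two_mul_semilength_eq_length, d.2]
  have hu : (unpair d.1.toList).length = n / 2 := by rw [unpair_length, hd]; omega
  constructor
  · unfold strOfDyck
    apply pairsToStr_length
    rw [hu]
    omega
  · unfold strOfDyck
    have := pairsToStr_margin n d.1 (by rw [d.2]; omega) (by rw [d.2]; omega)
    exact this


end CC

open CC in
/-- For every `t ≥ 1` and every `n` with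
`n ≥ 156·t²·log₂(8n)`, there is a code `C ⊆ {0,1}^n` of size at least
`2^(n - ⌈156·t²·log₂(8n)⌉)` (i.e., with `O(t² log n)` bits of redundancy) that
corrects `t` composition errors with unique string recovery: no multiset of
compositions can be obtained, by at most `t` composition errors each, from the
composition multisets of two distinct codewords. -/
theorem exists_t_error_correcting_code (t n : ℕ) (ht : 1 ≤ t)
    (hn : 156 * (t : ℝ) ^ 2 * Real.logb 2 (8 * n) ≤ n) :
    ∃ C : Finset (List Bool),
      (∀ s ∈ C, s.length = n) ∧
      2 ^ (n - ⌈156 * (t : ℝ) ^ 2 * Real.logb 2 (8 * n)⌉₊) ≤ C.card ∧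
      ∀ s ∈ C, ∀ s' ∈ C, s ≠ s' →
        ¬ ∃ M : Multiset (ℕ × ℕ),
            corruptBy t (compMultiset s) M ∧ corruptBy t (compMultiset s') M := by
  classical
  rcases Nat.eq_zero_or_pos n with rfl | hn0
  · refine ⟨{[]}, ?_, ?_, ?_⟩
    · intro s hs
      rw [Finset.mem_singleton] at hs
      subst hs
      rfl
    · have hx : 156 * (t : ℝ) ^ 2 * Real.logb 2 (8 * (0 : ℕ)) = 0 := by
        push_cast
        simp
      rw [hx]
      simp
    · intro s hs s' hs' hne
      rw [Finset.mem_singleton] at hs hs'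
      subst hs; subst hs'
      exact absurd rfl hne
  have ht1 : (1 : ℝ) ≤ (t : ℝ) := by exact_mod_cast ht
  have h8n : (0 : ℝ) < 8 * (n : ℕ) := by
    have : (1 : ℝ) ≤ (n : ℝ) := by exact_mod_cast hn0
    push_cast
    nlinarith
  have hlog3 : (3 : ℝ) ≤ Real.logb 2 (8 * n) := by
    have h8 : (8 : ℝ) ≤ 8 * n := by
      have : (1 : ℝ) ≤ (n : ℝ) := by exact_mod_cast hn0
      nlinarith
    calc (3 : ℝ) = Real.logb 2 8 := by
          rw [show (8 : ℝ) = 2 ^ (3 : ℕ) by norm_num, Real.logb_pow,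
            Real.logb_self_eq_one (by norm_num)]
          norm_num
      _ ≤ Real.logb 2 (8 * n) := Real.logb_le_logb_of_le (by norm_num) (by norm_num) h8
  have h468 : 468 ≤ n := by
    have h1 : (468 : ℝ) ≤ 156 * (t : ℝ) ^ 2 * Real.logb 2 (8 * n) := by nlinarith
    have h2 : (468 : ℝ) ≤ (n : ℝ) := le_trans h1 hn
    exact_mod_cast h2
  set K := (n + 1) / 2 with hK
  set m := n / 2 with hm
  set B := (n + 1) * ((K + 1) ^ 3 + 1) ^ (2 * t) with hBdef
  set R : List Bool → List Bool → Prop := fun c s =>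
    ∃ M, corruptBy t (compMultiset c) M ∧ corruptBy t (compMultiset s) M with hR
  haveI : DecidableRel R := fun _ _ => Classical.dec _
  have hrefl : ∀ a ∈ S0 n, R a a := by
    intro a _
    refine ⟨compMultiset a, ?_, ?_⟩ <;>
      exact ⟨0, by simp, by simp, by simp, by simp⟩
  have hsymm : ∀ a b, R a b → R b a := by
    rintro a b ⟨M, h1, h2⟩
    exact ⟨M, h2, h1⟩
  have hball : ∀ c ∈ S0 n, ∀ s ∈ S0 n, R c s →
      s ∈ (S0 n).filter (fun s' => (dS n K c s').card ≤ 2 * t) := by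
    intro c _ s hs hRcs
    rw [Finset.mem_filter]
    exact ⟨hs, dS_card (by omega) c s hRcs⟩
  have hBmax : ∀ c ∈ S0 n,
      ((S0 n).filter (fun s' => (dS n K c s').card ≤ 2 * t)).card ≤ B := by
    intro c _
    exact ball_card n t (by omega) c (S0 n) (S0_mem n)
  obtain ⟨C, hCS, hind, hcard⟩ := greedy (S0 n) R hrefl hsymm
    (fun c => (S0 n).filter (fun s' => (dS n K c s').card ≤ 2 * t)) B hball hBmax
  refine ⟨C, ?_, ?_, ?_⟩
  · intro s hs
    exact (S0_mem n s (hCS hs)).1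
  · -- cardinality bound
    set r := ⌈156 * (t : ℝ) ^ 2 * Real.logb 2 (8 * n)⌉₊ with hr
    have hrn : r ≤ n := Nat.ceil_le.mpr hn
    -- (8n)^(156 t^2) ≤ 2^r
    have hpow : (8 * n) ^ (156 * t ^ 2) ≤ 2 ^ r := by
      have hA : (2 : ℝ) ^ (156 * (t : ℝ) ^ 2 * Real.logb 2 (8 * n))
          = ((8 * n : ℕ) : ℝ) ^ (156 * t ^ 2 : ℕ) := by
        rw [mul_comm (156 * (t : ℝ) ^ 2) (Real.logb 2 (8 * n)),
          Real.rpow_mul (by norm_num), Real.rpow_logb (by norm_num) (by norm_num) h8n]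
        rw [show (156 * (t : ℝ) ^ 2) = ((156 * t ^ 2 : ℕ) : ℝ) by push_cast; ring,
          Real.rpow_natCast]
        push_cast
        ring
      have hB2 : (2 : ℝ) ^ (156 * (t : ℝ) ^ 2 * Real.logb 2 (8 * n)) ≤ (2 : ℝ) ^ ((r : ℕ) : ℝ) :=
        (Real.rpow_le_rpow_left_iff (by norm_num)).mpr (Nat.le_ceil _)
      rw [hA, Real.rpow_natCast] at hB2
      exact_mod_cast hB2
    -- 2*m*(m+1)*B ≤ (8n)^(156 t^2)
    have hKn : K + 1 ≤ n := by omega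
    have hq2 : ((K + 1) ^ 3 + 1) ^ (2 * t) ≤ (8 * n) ^ (6 * t) := by
      have hbase : (K + 1) ^ 3 + 1 ≤ (8 * n) ^ 3 := by
        have h1 : (K + 1) ^ 3 ≤ n ^ 3 := Nat.pow_le_pow_left hKn 3
        have h2 : n ^ 3 + 1 ≤ 512 * n ^ 3 := by
          have h1p : 1 ≤ n ^ 3 := Nat.one_le_pow _ _ hn0
          linarith
        calc (K + 1) ^ 3 + 1 ≤ n ^ 3 + 1 := by omega
          _ ≤ 512 * n ^ 3 := h2
          _ = (8 * n) ^ 3 := by ring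
      calc ((K + 1) ^ 3 + 1) ^ (2 * t) ≤ ((8 * n) ^ 3) ^ (2 * t) :=
            Nat.pow_le_pow_left hbase _
        _ = (8 * n) ^ (6 * t) := by rw [← pow_mul]; ring_nf
    have hq1 : 2 * m * (m + 1) * (n + 1) ≤ (8 * n) ^ 3 := by
      have hm1 : m ≤ n := by omega
      have hm2 : m + 1 ≤ n := by omega
      have hn1 : n + 1 ≤ 2 * n := by omega
      calc 2 * m * (m + 1) * (n + 1) ≤ 2 * n * n * (2 * n) := by
            apply Nat.mul_le_mul
            apply Nat.mul_le_mul
            apply Nat.mul_le_mul_left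
            exact hm1
            exact hm2
            exact hn1
        _ ≤ 512 * (n * n * n) := by nlinarith
        _ = (8 * n) ^ 3 := by ring
    have hQ : 2 * m * (m + 1) * B ≤ 2 ^ r := by
      calc 2 * m * (m + 1) * B
          = (2 * m * (m + 1) * (n + 1)) * ((K + 1) ^ 3 + 1) ^ (2 * t) := by
            rw [hBdef]; ring
        _ ≤ (8 * n) ^ 3 * (8 * n) ^ (6 * t) := Nat.mul_le_mul hq1 hq2
        _ = (8 * n) ^ (6 * t + 3) := by rw [← pow_add]; ring_nf
        _ ≤ (8 * n) ^ (156 * t ^ 2) := by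
            apply Nat.pow_le_pow_right (by omega)
            nlinarith
        _ ≤ 2 ^ r := hpow
    -- 2^n ≤ 2*m*(m+1) * (C.card * B)
    have hm4 : 4 ≤ m := by omega
    have h4 : 4 ^ m ≤ m * ((m + 1) * catalan m) := by
      have := Nat.four_pow_lt_mul_centralBinom m (by omega)
      rw [← succ_mul_catalan_eq_centralBinom] at this
      omega
    have h2n : 2 ^ n ≤ 2 * 4 ^ m := by
      calc 2 ^ n ≤ 2 ^ (2 * m + 1) := Nat.pow_le_pow_right (by omega) (by omega)
        _ = 2 * 4 ^ m := by rw [pow_succ, pow_mul]; ring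
    have hSC : catalan m ≤ C.card * B := by
      have := hcard
      rwa [S0_card n, ← hm] at this
    have hchain : 2 ^ n ≤ (2 * m * (m + 1) * B) * C.card := by
      calc 2 ^ n ≤ 2 * 4 ^ m := h2n
        _ ≤ 2 * (m * ((m + 1) * catalan m)) := by omega
        _ = 2 * m * (m + 1) * catalan m := by ring
        _ ≤ 2 * m * (m + 1) * (C.card * B) := Nat.mul_le_mul_left _ hSC
        _ = (2 * m * (m + 1) * B) * C.card := by ring
    have hfin : 2 ^ (n - r) * (2 * m * (m + 1) * B) ≤ C.card * (2 * m * (m + 1) * B) := by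
      calc 2 ^ (n - r) * (2 * m * (m + 1) * B) ≤ 2 ^ (n - r) * 2 ^ r :=
            Nat.mul_le_mul_left _ hQ
        _ = 2 ^ n := by rw [← pow_add]; congr 1; omega
        _ ≤ (2 * m * (m + 1) * B) * C.card := hchain
        _ = C.card * (2 * m * (m + 1) * B) := by ring
    have hpos : 0 < 2 * m * (m + 1) * B := by
      have : 0 < B := by positivity
      positivity
    exact Nat.le_of_mul_le_mul_right hfin hpos
  · intro s hs s' hs' hne hM
    exact hind s hs s' hs' hne hM
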